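/- At an equilibrium of the Physarum dynamics (D_e = |Q_e| for all e), the minimum capacity of an s₀-s₁ cut equals the capacity of the cut {s₀}, and both equal 1. -/

import Mathlib

open Finset

/-- At an equilibrium of the Physarum dynamics (`D_e = |Q_e|` for every edge),
the minimum capacity of an `s₀`-`s₁` cut equals the capacity of the cut
`{s₀}`, and both equal `1`.  Here `Q` is the unit-value electrical
`s₀`-`s₁` flow induced by the potentials `p`, and the capacity of a cut `S`
(with `s₀ ∈ S`, `s₁ ∉ S`) is `Σ_{u∈S, v∉S} D u v`. -/
theorem equilibrium_mincut {V : Type*} [Fintype V] [DecidableEq V]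
    (Adj : V → V → Prop) [DecidableRel Adj]
    (hsymm : ∀ u v, Adj u v → Adj v u) (hirrefl : ∀ v, ¬ Adj v v)
    (R : V → V → ℝ) (hR : ∀ u v, Adj u v → 0 < R u v)
    (hRsymm : ∀ u v, R u v = R v u)
    (s₀ s₁ : V) (hne : s₀ ≠ s₁)
    (p : V → ℝ) (Q : V → V → ℝ)
    (hQ : ∀ u v, Q u v = if Adj u v then (p u - p v) / R u v else 0)
    (hkirchhoff : ∀ v, ∑ u, Q v u =
      if v = s₀ then 1 else if v = s₁ then -1 else 0)
    (D : V → V → ℝ)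
    (hEq : ∀ u v, D u v = |Q u v|) :
    (∑ v ∈ univ.filter (fun v => v ≠ s₀), D s₀ v = 1) ∧
    (∀ S : Finset V, s₀ ∈ S → s₁ ∉ S →
      1 ≤ ∑ u ∈ S, ∑ v ∈ Sᶜ, D u v) := by
  have hanti : ∀ u v, Q v u = - Q u v := by
    intro u v
    rw [hQ, hQ]
    by_cases h : Adj u v
    · have h' : Adj v u := hsymm u v h
      rw [if_pos h, if_pos h', hRsymm v u]
      ring
    · have h' : ¬ Adj v u := fun hh => h (hsymm v u hh)
      rw [if_neg h, if_neg h', neg_zero]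
  have hdiag : ∀ u, Q u u = 0 := by
    intro u; rw [hQ]; simp [hirrefl u]
  -- sum of Q over S × S is zero by antisymmetry
  have hSS : ∀ S : Finset V, ∑ u ∈ S, ∑ v ∈ S, Q u v = 0 := by
    intro S
    have h3 : ∑ u ∈ S, ∑ v ∈ S, Q u v = ∑ u ∈ S, ∑ v ∈ S, - Q u v := by
      conv_lhs => rw [Finset.sum_comm]
      exact Finset.sum_congr rfl fun a _ => Finset.sum_congr rfl fun b _ => hanti a b
    have h4 : ∑ u ∈ S, ∑ v ∈ S, - Q u v = - ∑ u ∈ S, ∑ v ∈ S, Q u v := by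
      simp [Finset.sum_neg_distrib]
    linarith [h3.trans h4]
  -- flow across any cut equals sum of divergences inside
  have hcut : ∀ S : Finset V, ∑ u ∈ S, ∑ v ∈ Sᶜ, Q u v
      = ∑ u ∈ S, (if u = s₀ then (1:ℝ) else if u = s₁ then -1 else 0) := by
    intro S
    have h1 : ∀ u ∈ S, ∑ v ∈ Sᶜ, Q u v
        = (if u = s₀ then (1:ℝ) else if u = s₁ then -1 else 0) - ∑ v ∈ S, Q u v := by
      intro u _
      have := Finset.sum_add_sum_compl S (fun v => Q u v)
      rw [hkirchhoff u] at this
      linarith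
    rw [Finset.sum_congr rfl h1, Finset.sum_sub_distrib, hSS S, sub_zero]
  -- all neighbors of s₀ have potential ≤ p s₀
  have hmax : ∀ v, Adj s₀ v → p v ≤ p s₀ := by
    intro v hv
    by_contra hlt
    push_neg at hlt
    set S : Finset V := univ.filter (fun w => p s₀ < p w) with hS
    have hs₀S : s₀ ∉ S := by simp [hS]
    have hnonneg : ∀ u ∈ S, ∀ w ∈ Sᶜ, 0 ≤ Q u w := by
      intro u hu w hw
      rw [hQ]
      split_ifs with h
      · have hu' : p s₀ < p u := (Finset.mem_filter.mp hu).2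
        have hw' : ¬ p s₀ < p w := by
          simp only [Finset.mem_compl, hS, Finset.mem_filter, Finset.mem_univ,
            true_and] at hw
          exact hw
        push_neg at hw'
        have : 0 ≤ p u - p w := by linarith
        exact div_nonneg this (le_of_lt (hR u w h))
      · exact le_rfl
    have hle : ∑ u ∈ S, ∑ w ∈ Sᶜ, Q u w ≤ 0 := by
      rw [hcut S]
      apply Finset.sum_nonpos
      intro u hu
      have : u ≠ s₀ := fun h => hs₀S (h ▸ hu)
      rw [if_neg this]
      split_ifs <;> norm_num
    have hzero : ∑ u ∈ S, ∑ w ∈ Sᶜ, Q u w = 0 := le_antisymm hle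
      (Finset.sum_nonneg fun u hu => Finset.sum_nonneg (hnonneg u hu))
    have hall := (Finset.sum_eq_zero_iff_of_nonneg
      (fun u hu => Finset.sum_nonneg (hnonneg u hu))).mp hzero
    have hvS : v ∈ S := by simp [hS, hlt]
    have hinner := (Finset.sum_eq_zero_iff_of_nonneg (hnonneg v hvS)).mp (hall v hvS)
    have hs₀c : s₀ ∈ Sᶜ := Finset.mem_compl.mpr hs₀S
    have h0 := hinner s₀ hs₀c
    rw [hQ, if_pos (hsymm s₀ v hv)] at h0
    have hpos : 0 < (p v - p s₀) / R v s₀ :=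
      div_pos (by linarith) (hR v s₀ (hsymm s₀ v hv))
    linarith
  have hQnn : ∀ v, 0 ≤ Q s₀ v := by
    intro v
    rw [hQ]
    split_ifs with h
    · exact div_nonneg (by linarith [hmax v h]) (le_of_lt (hR s₀ v h))
    · exact le_rfl
  constructor
  · have h1 : ∑ v ∈ univ.filter (fun v => v ≠ s₀), D s₀ v
        = ∑ v ∈ univ.filter (fun v => v ≠ s₀), Q s₀ v := by
      apply Finset.sum_congr rfl
      intro v _
      rw [hEq, abs_of_nonneg (hQnn v)]
    have h2 : ∑ v ∈ univ.filter (fun v => v ≠ s₀), Q s₀ v = ∑ v, Q s₀ v := by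
      apply Finset.sum_subset (Finset.filter_subset _ _)
      intro x _ hx
      simp only [Finset.mem_filter, Finset.mem_univ, true_and, not_not] at hx
      rw [hx]; exact hdiag s₀
    rw [h1, h2, hkirchhoff s₀, if_pos rfl]
  · intro S hs₀ hs₁
    have hQcut : ∑ u ∈ S, ∑ v ∈ Sᶜ, Q u v = 1 := by
      rw [hcut S]
      have : ∀ u ∈ S, (if u = s₀ then (1:ℝ) else if u = s₁ then -1 else 0)
          = if u = s₀ then 1 else 0 := by
        intro u hu
        by_cases h : u = s₀
        · simp [h]
        · have : u ≠ s₁ := fun h' => hs₁ (h' ▸ hu)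
          simp [h, this]
      rw [Finset.sum_congr rfl this, Finset.sum_ite_eq' S s₀, if_pos hs₀]
    calc (1:ℝ) = ∑ u ∈ S, ∑ v ∈ Sᶜ, Q u v := hQcut.symm
      _ ≤ ∑ u ∈ S, ∑ v ∈ Sᶜ, D u v := by
          apply Finset.sum_le_sum
          intro u _
          apply Finset.sum_le_sum
          intro v _
          rw [hEq]
          exact le_abs_self _
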